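/- Let λ/κ be a skew shape of size n and let μ, ν be partitions of n with μ ⊵ ν. Then the skew Kostka number K_{λ/κ, μ} ≤ K_{λ/κ, ν}, where K_{λ/κ, μ} counts semistandard skew tableaux of shape λ/κ and content μ. -/
import Mathlib


/-- A composition of `n`: a finitely-supported sequence of naturals summing to `n`. -/
def IsComposition (n : ℕ) (μ : ℕ → ℕ) : Prop :=
  (Function.support μ).Finite ∧ ∑ᶠ i, μ i = n

/-- A partition of `n`: a weakly decreasing composition of `n`. -/
def IsPartition (n : ℕ) (μ : ℕ → ℕ) : Prop :=
  Antitone μ ∧ IsComposition n μ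

/-- `μ` dominates `ν`: every partial sum of `μ` is at least that of `ν`. -/
def Dominates (μ ν : ℕ → ℕ) : Prop :=
  ∀ r, ∑ i ∈ Finset.range r, ν i ≤ ∑ i ∈ Finset.range r, μ i

/-- Semistandard skew tableau of shape `lam / kap`. -/
def IsSkewSSYT (lam kap : ℕ → ℕ) (T : ℕ → ℕ → ℕ) : Prop :=
  (∀ r c₁ c₂, c₁ ≤ c₂ → kap r ≤ c₁ → c₂ < lam r → T r c₁ ≤ T r c₂) ∧
  (∀ r₁ r₂ c, r₁ < r₂ → kap r₁ ≤ c → c < lam r₁ → kap r₂ ≤ c → c < lam r₂ →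
      T r₁ c < T r₂ c) ∧
  (∀ r c, c < kap r ∨ lam r ≤ c → T r c = 0)

/-- The number of entries of `T` equal to `i` within the skew diagram `lam / kap`. -/
noncomputable def skewContentOf (lam kap : ℕ → ℕ) (T : ℕ → ℕ → ℕ) (i : ℕ) : ℕ :=
  {q : ℕ × ℕ | kap q.1 ≤ q.2 ∧ q.2 < lam q.1 ∧ T q.1 q.2 = i}.ncard

/-- The skew Kostka number. -/
noncomputable def SkewKostka (lam kap μ : ℕ → ℕ) : ℕ :=
  {T : ℕ → ℕ → ℕ | IsSkewSSYT lam kap T ∧ ∀ i, skewContentOf lam kap T i = μ i}.ncard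

namespace Kostka169

open Finset

/-- The diagram as a finset, given bounds `R` (rows) and `C` (max column+ bound). -/
def DD (lam kap : ℕ → ℕ) (R C : ℕ) : Finset (ℕ × ℕ) :=
  (Finset.range R ×ˢ Finset.range (C+1)).filter (fun q => kap q.1 ≤ q.2 ∧ q.2 < lam q.1)

/-- Reading position: bottom-to-top rows, left-to-right within rows. -/
def pos (R C : ℕ) (q : ℕ × ℕ) : ℕ := (R - q.1) * (C + 1) + q.2

def NN (R C : ℕ) : ℕ := (R + 1) * (C + 1)

/-- number of cells of value `v` with reading position `< t` -/
def cnt (lam kap : ℕ → ℕ) (R C : ℕ) (T : ℕ → ℕ → ℕ) (v t : ℕ) : ℕ :=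
  ((DD lam kap R C).filter (fun q => T q.1 q.2 = v ∧ pos R C q < t)).card

/-- the height function of the bracketing word for letters i, i+1 -/
def hh (lam kap : ℕ → ℕ) (R C : ℕ) (T : ℕ → ℕ → ℕ) (i : ℕ) (t : ℕ) : ℤ :=
  (cnt lam kap R C T (i+1) t : ℤ) - (cnt lam kap R C T i t : ℤ)

/-- minimum of the height function -/
def MM (lam kap : ℕ → ℕ) (R C : ℕ) (T : ℕ → ℕ → ℕ) (i : ℕ) : ℤ :=
  (Finset.range (NN R C + 1)).inf' ⟨0, Finset.mem_range.2 (Nat.succ_pos _)⟩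
    (hh lam kap R C T i)

/-- first time the height function attains its minimum -/
noncomputable def tt (lam kap : ℕ → ℕ) (R C : ℕ) (T : ℕ → ℕ → ℕ) (i : ℕ) : ℕ :=
  sInf {t | hh lam kap R C T i t = MM lam kap R C T i}

/-- the crystal lowering operator `f_i` -/
noncomputable def fT (lam kap : ℕ → ℕ) (R C : ℕ) (T : ℕ → ℕ → ℕ) (i : ℕ) : ℕ → ℕ → ℕ := fun r c =>
  if (r, c) ∈ DD lam kap R C ∧ pos R C (r, c) = tt lam kap R C T i - 1 ∧ T r c = i
  then i + 1 else T r c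

section Basic

variable {lam kap : ℕ → ℕ} {R C : ℕ}

lemma mem_DD_iff (hR : ∀ r, R ≤ r → lam r = 0) (hC : ∀ r, lam r ≤ C) {q : ℕ × ℕ} :
    q ∈ DD lam kap R C ↔ kap q.1 ≤ q.2 ∧ q.2 < lam q.1 := by
  constructor
  · intro hq
    exact (Finset.mem_filter.1 hq).2
  · intro hq
    refine Finset.mem_filter.2 ⟨Finset.mem_product.2 ⟨Finset.mem_range.2 ?_, Finset.mem_range.2 ?_⟩, hq⟩
    · by_contra hcon
      have : lam q.1 = 0 := hR _ (le_of_not_gt hcon)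
      omega
    · have := hC q.1; omega

lemma col_le_C (hC : ∀ r, lam r ≤ C) {q : ℕ × ℕ} (hq : q ∈ DD lam kap R C) :
    q.2 < C := by
  have h2 := (Finset.mem_filter.1 hq).2.2
  have := hC q.1
  omega

lemma row_lt_R {q : ℕ × ℕ} (hq : q ∈ DD lam kap R C) : q.1 < R := by
  have := Finset.mem_product.1 (Finset.mem_filter.1 hq).1
  exact Finset.mem_range.1 this.1

lemma pos_lt_NN (hC : ∀ r, lam r ≤ C) {q : ℕ × ℕ} (hq : q ∈ DD lam kap R C) :
    pos R C q < NN R C := by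
  have h1 : q.2 < C := col_le_C hC hq
  have h2 : R - q.1 ≤ R := Nat.sub_le _ _
  have : (R - q.1) * (C + 1) ≤ R * (C + 1) := Nat.mul_le_mul_right _ h2
  unfold pos NN
  nlinarith

lemma pos_injOn (hC : ∀ r, lam r ≤ C) {q q' : ℕ × ℕ}
    (hq : q ∈ DD lam kap R C) (hq' : q' ∈ DD lam kap R C)
    (hpos : pos R C q = pos R C q') : q = q' := by
  have h1 : q.2 < C + 1 := Nat.lt_succ_of_lt (col_le_C hC hq)
  have h1' : q'.2 < C + 1 := Nat.lt_succ_of_lt (col_le_C hC hq')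
  have hr : q.1 < R := row_lt_R hq
  have hr' : q'.1 < R := row_lt_R hq'
  unfold pos at hpos
  have hc : q.2 = q'.2 := by
    have h2 : ((R - q.1) * (C + 1) + q.2) % (C+1) = ((R - q'.1) * (C + 1) + q'.2) % (C+1) := by
      rw [hpos]
    rw [Nat.mul_add_mod', Nat.mul_add_mod', Nat.mod_eq_of_lt h1, Nat.mod_eq_of_lt h1'] at h2
    exact h2
  have : (R - q.1) = (R - q'.1) := by
    rw [hc] at hpos
    have := Nat.add_right_cancel hpos
    exact Nat.eq_of_mul_eq_mul_right (Nat.succ_pos C) this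
  have : q.1 = q'.1 := by omega
  exact Prod.ext this hc

lemma pos_lt_of_row_gt (hC : ∀ r, lam r ≤ C) {q q' : ℕ × ℕ}
    (hq : q ∈ DD lam kap R C) (hq' : q' ∈ DD lam kap R C)
    (hrow : q.1 < q'.1) : pos R C q' < pos R C q := by
  have h1' : q'.2 < C + 1 := Nat.lt_succ_of_lt (col_le_C hC hq')
  have hr : q.1 < R := row_lt_R hq
  unfold pos
  have hsub : R - q'.1 + 1 ≤ R - q.1 := by omega
  calc (R - q'.1) * (C + 1) + q'.2 < (R - q'.1) * (C+1) + (C+1) := by omega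
    _ = (R - q'.1 + 1) * (C + 1) := by ring
    _ ≤ (R - q.1) * (C+1) := Nat.mul_le_mul_right _ hsub
    _ ≤ (R - q.1) * (C+1) + q.2 := Nat.le_add_right _ _

lemma pos_same_row {r c c' : ℕ} : pos R C (r, c) ≤ pos R C (r, c') ↔ c ≤ c' := by
  unfold pos; simp

end Basic

section Count

variable {lam kap : ℕ → ℕ} {R C : ℕ} {T : ℕ → ℕ → ℕ}

lemma cnt_zero (v : ℕ) : cnt lam kap R C T v 0 = 0 := by
  unfold cnt
  rw [Finset.card_eq_zero, Finset.filter_eq_empty_iff]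
  intro q _
  simp

lemma hh_zero (i : ℕ) : hh lam kap R C T i 0 = 0 := by
  unfold hh; rw [cnt_zero, cnt_zero]; ring

lemma cnt_succ (v t : ℕ) :
    cnt lam kap R C T v (t+1) = cnt lam kap R C T v t +
      ((DD lam kap R C).filter (fun q => T q.1 q.2 = v ∧ pos R C q = t)).card := by
  unfold cnt
  have hsplit : (DD lam kap R C).filter (fun q => T q.1 q.2 = v ∧ pos R C q < t + 1) =
      (DD lam kap R C).filter
        (fun q => (T q.1 q.2 = v ∧ pos R C q < t) ∨ (T q.1 q.2 = v ∧ pos R C q = t)) := by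
    apply Finset.filter_congr
    intro q _
    constructor
    · rintro ⟨h1, h2⟩
      rcases Nat.lt_succ_iff_lt_or_eq.1 h2 with h | h
      · exact Or.inl ⟨h1, h⟩
      · exact Or.inr ⟨h1, h⟩
    · rintro (⟨h1, h2⟩ | ⟨h1, h2⟩) <;> exact ⟨h1, by omega⟩
  rw [hsplit, Finset.filter_or, Finset.card_union_of_disjoint]
  rw [Finset.disjoint_left]
  intro q hq hq'
  have h1 := (Finset.mem_filter.1 hq).2.2
  have h2 := (Finset.mem_filter.1 hq').2.2
  omega

lemma cnt_succ_of_cell (hC : ∀ r, lam r ≤ C) {q₀ : ℕ × ℕ} (hq₀ : q₀ ∈ DD lam kap R C)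
    {t : ℕ} (hpos : pos R C q₀ = t) (v : ℕ) :
    cnt lam kap R C T v (t+1) = cnt lam kap R C T v t +
      (if T q₀.1 q₀.2 = v then 1 else 0) := by
  rw [cnt_succ]
  congr 1
  by_cases hv : T q₀.1 q₀.2 = v
  · rw [if_pos hv]
    rw [Finset.card_eq_one]
    refine ⟨q₀, ?_⟩
    ext q
    simp only [Finset.mem_filter, Finset.mem_singleton]
    constructor
    · rintro ⟨hq, h1, h2⟩
      exact pos_injOn hC hq hq₀ (by omega)
    · rintro rfl
      exact ⟨hq₀, hv, hpos⟩
  · rw [if_neg hv, Finset.card_eq_zero, Finset.filter_eq_empty_iff]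
    intro q hq
    rintro ⟨h1, h2⟩
    have : q = q₀ := pos_injOn hC hq hq₀ (by omega)
    subst this
    exact hv h1

lemma cnt_succ_of_no_cell (hC : ∀ r, lam r ≤ C)
    {t : ℕ} (hno : ∀ q ∈ DD lam kap R C, pos R C q ≠ t) (v : ℕ) :
    cnt lam kap R C T v (t+1) = cnt lam kap R C T v t := by
  rw [cnt_succ]
  have : ((DD lam kap R C).filter (fun q => T q.1 q.2 = v ∧ pos R C q = t)).card = 0 := by
    rw [Finset.card_eq_zero, Finset.filter_eq_empty_iff]
    intro q hq
    rintro ⟨h1, h2⟩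
    exact hno q hq h2
  omega

lemma hh_step (hC : ∀ r, lam r ≤ C) (i t : ℕ) :
    hh lam kap R C T i t - 1 ≤ hh lam kap R C T i (t+1) ∧
      hh lam kap R C T i (t+1) ≤ hh lam kap R C T i t + 1 := by
  by_cases hex : ∃ q ∈ DD lam kap R C, pos R C q = t
  · obtain ⟨q₀, hq₀, hpos⟩ := hex
    have h1 := cnt_succ_of_cell (T := T) hC hq₀ hpos (i+1)
    have h2 := cnt_succ_of_cell (T := T) hC hq₀ hpos i
    unfold hh
    rw [h1, h2]
    by_cases e1 : T q₀.1 q₀.2 = i + 1 <;> by_cases e2 : T q₀.1 q₀.2 = i <;>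
      simp [e1, e2] <;> push_cast <;> omega
  · push_neg at hex
    have h1 := cnt_succ_of_no_cell (T := T) hC hex (i+1)
    have h2 := cnt_succ_of_no_cell (T := T) hC hex i
    unfold hh
    rw [h1, h2]
    omega

lemma cnt_stab (hC : ∀ r, lam r ≤ C) {t : ℕ} (ht : NN R C ≤ t) (v : ℕ) :
    cnt lam kap R C T v t = cnt lam kap R C T v (NN R C) := by
  unfold cnt
  congr 1
  apply Finset.filter_congr
  intro q hq
  have := pos_lt_NN hC hq
  constructor
  · rintro ⟨h1, _⟩; exact ⟨h1, this⟩
  · rintro ⟨h1, _⟩; exact ⟨h1, by omega⟩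

lemma hh_stab (hC : ∀ r, lam r ≤ C) {t : ℕ} (ht : NN R C ≤ t) (i : ℕ) :
    hh lam kap R C T i t = hh lam kap R C T i (NN R C) := by
  unfold hh; rw [cnt_stab hC ht, cnt_stab hC ht]

lemma skewContentOf_eq_card (hR : ∀ r, R ≤ r → lam r = 0) (hC : ∀ r, lam r ≤ C) (v : ℕ) :
    skewContentOf lam kap T v = ((DD lam kap R C).filter (fun q => T q.1 q.2 = v)).card := by
  unfold skewContentOf
  rw [show {q : ℕ × ℕ | kap q.1 ≤ q.2 ∧ q.2 < lam q.1 ∧ T q.1 q.2 = v} =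
      ↑((DD lam kap R C).filter (fun q => T q.1 q.2 = v)) from ?_]
  · exact Set.ncard_coe_finset _
  · ext q
    simp only [Set.mem_setOf_eq, Finset.coe_filter, mem_DD_iff hR hC]
    tauto

lemma cnt_top (hC : ∀ r, lam r ≤ C) (v : ℕ) :
    cnt lam kap R C T v (NN R C) = ((DD lam kap R C).filter (fun q => T q.1 q.2 = v)).card := by
  unfold cnt
  congr 1
  apply Finset.filter_congr
  intro q hq
  simp only [and_iff_left_iff_imp]
  intro _
  exact pos_lt_NN hC hq

end Count

section Select

variable {lam kap : ℕ → ℕ} {R C : ℕ} {T : ℕ → ℕ → ℕ} {i : ℕ}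

lemma MM_le_hh (hC : ∀ r, lam r ≤ C) (i : ℕ) (t : ℕ) :
    MM lam kap R C T i ≤ hh lam kap R C T i t := by
  by_cases ht : t ≤ NN R C
  · exact Finset.inf'_le _ (Finset.mem_range.2 (by omega))
  · rw [hh_stab hC (by omega)]
    exact Finset.inf'_le _ (Finset.mem_range.2 (by omega))

lemma exists_hh_eq_MM : ∃ t, hh lam kap R C T i t = MM lam kap R C T i := by
  obtain ⟨t, _, ht⟩ := Finset.exists_mem_eq_inf' (α := ℤ)
    (⟨0, Finset.mem_range.2 (Nat.succ_pos _)⟩ : (Finset.range (NN R C + 1)).Nonempty)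
    (hh lam kap R C T i)
  exact ⟨t, ht.symm⟩

lemma hh_tt_eq : hh lam kap R C T i (tt lam kap R C T i) = MM lam kap R C T i :=
  Nat.sInf_mem exists_hh_eq_MM

lemma hh_ne_MM_of_lt {t : ℕ} (ht : t < tt lam kap R C T i) :
    hh lam kap R C T i t ≠ MM lam kap R C T i :=
  fun hcon => Nat.notMem_of_lt_sInf ht hcon

lemma MM_neg
    (hab : ((DD lam kap R C).filter (fun q => T q.1 q.2 = i+1)).card <
      ((DD lam kap R C).filter (fun q => T q.1 q.2 = i)).card)
    (hC : ∀ r, lam r ≤ C) :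
    MM lam kap R C T i < 0 := by
  have h1 : hh lam kap R C T i (NN R C) < 0 := by
    unfold hh
    rw [cnt_top hC, cnt_top hC]
    have := hab
    push_cast
    omega
  exact lt_of_le_of_lt (MM_le_hh hC i (NN R C)) h1

lemma tt_pos
    (hab : ((DD lam kap R C).filter (fun q => T q.1 q.2 = i+1)).card <
      ((DD lam kap R C).filter (fun q => T q.1 q.2 = i)).card)
    (hC : ∀ r, lam r ≤ C) :
    0 < tt lam kap R C T i := by
  rcases Nat.eq_zero_or_pos (tt lam kap R C T i) with h | h
  · exfalso
    have h0 : hh lam kap R C T i 0 = MM lam kap R C T i := by rw [← h]; exact hh_tt_eq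
    rw [hh_zero] at h0
    have := MM_neg hab hC
    omega
  · exact h

lemma hh_pred_eq
    (hab : ((DD lam kap R C).filter (fun q => T q.1 q.2 = i+1)).card <
      ((DD lam kap R C).filter (fun q => T q.1 q.2 = i)).card)
    (hC : ∀ r, lam r ≤ C) :
    hh lam kap R C T i (tt lam kap R C T i - 1) = MM lam kap R C T i + 1 := by
  have htpos := tt_pos hab hC
  set t := tt lam kap R C T i - 1 with hdef
  have htt : tt lam kap R C T i = t + 1 := by omega
  have hne : hh lam kap R C T i t ≠ MM lam kap R C T i := hh_ne_MM_of_lt (by omega)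
  have hge : MM lam kap R C T i ≤ hh lam kap R C T i t := MM_le_hh hC i t
  have hstep := (hh_step (lam := lam) (kap := kap) (R := R) (T := T) hC i t).1
  rw [← htt] at hstep
  rw [hh_tt_eq] at hstep
  omega

/-- The selected cell: the unique cell at reading position `tt - 1`; it carries letter `i`. -/
lemma selected_cell
    (hab : ((DD lam kap R C).filter (fun q => T q.1 q.2 = i+1)).card <
      ((DD lam kap R C).filter (fun q => T q.1 q.2 = i)).card)
    (hC : ∀ r, lam r ≤ C) :
    ∃ p ∈ DD lam kap R C, pos R C p = tt lam kap R C T i - 1 ∧ T p.1 p.2 = i := by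
  have htpos := tt_pos hab hC
  set t := tt lam kap R C T i - 1 with hdef
  have htt : tt lam kap R C T i = t + 1 := by omega
  have hdrop : hh lam kap R C T i (t + 1) = hh lam kap R C T i t - 1 := by
    rw [← htt, hh_tt_eq, hh_pred_eq hab hC]
    ring
  by_cases hex : ∃ q ∈ DD lam kap R C, pos R C q = t
  · obtain ⟨q₀, hq₀, hpos⟩ := hex
    refine ⟨q₀, hq₀, hpos, ?_⟩
    have h1 := cnt_succ_of_cell (T := T) hC hq₀ hpos (i+1)
    have h2 := cnt_succ_of_cell (T := T) hC hq₀ hpos i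
    by_contra hne
    unfold hh at hdrop
    rw [h1, h2] at hdrop
    by_cases e1 : T q₀.1 q₀.2 = i + 1
    · rw [if_pos e1, if_neg hne] at hdrop; push_cast at hdrop; omega
    · rw [if_neg e1, if_neg hne] at hdrop; push_cast at hdrop; omega
  · push_neg at hex
    exfalso
    have h1 := cnt_succ_of_no_cell (T := T) hC hex (i+1)
    have h2 := cnt_succ_of_no_cell (T := T) hC hex i
    unfold hh at hdrop
    rw [h1, h2] at hdrop
    omega

lemma fT_eq_update
    (hab : ((DD lam kap R C).filter (fun q => T q.1 q.2 = i+1)).card <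
      ((DD lam kap R C).filter (fun q => T q.1 q.2 = i)).card)
    (hC : ∀ r, lam r ≤ C)
    {p : ℕ × ℕ} (hp : p ∈ DD lam kap R C) (hppos : pos R C p = tt lam kap R C T i - 1)
    (hpi : T p.1 p.2 = i) :
    ∀ r c, fT lam kap R C T i r c = if (r, c) = p then i + 1 else T r c := by
  intro r c
  unfold fT
  by_cases h : (r, c) = p
  · rw [if_pos h, if_pos]
    subst h
    exact ⟨hp, hppos, hpi⟩
  · rw [if_neg h, if_neg]
    rintro ⟨h1, h2, h3⟩
    exact h (pos_injOn hC h1 hp (by omega))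

end Select

section Neighbors

variable {lam kap : ℕ → ℕ} {R C : ℕ} {T : ℕ → ℕ → ℕ} {i : ℕ} {p : ℕ × ℕ}

lemma cnt_split {s t : ℕ} (hst : s ≤ t) (v : ℕ) :
    cnt lam kap R C T v t = cnt lam kap R C T v s +
      ((DD lam kap R C).filter
        (fun q => T q.1 q.2 = v ∧ s ≤ pos R C q ∧ pos R C q < t)).card := by
  unfold cnt
  have hsplit : (DD lam kap R C).filter (fun q => T q.1 q.2 = v ∧ pos R C q < t) =
      (DD lam kap R C).filter
        (fun q => (T q.1 q.2 = v ∧ pos R C q < s) ∨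
          (T q.1 q.2 = v ∧ s ≤ pos R C q ∧ pos R C q < t)) := by
    apply Finset.filter_congr
    intro q _
    constructor
    · rintro ⟨h1, h2⟩
      by_cases hs : pos R C q < s
      · exact Or.inl ⟨h1, hs⟩
      · exact Or.inr ⟨h1, by omega, h2⟩
    · rintro (⟨h1, h2⟩ | ⟨h1, h2, h3⟩) <;> exact ⟨h1, by omega⟩
  rw [hsplit, Finset.filter_or, Finset.card_union_of_disjoint]
  rw [Finset.disjoint_left]
  intro q hq hq'
  have h1 := (Finset.mem_filter.1 hq).2.2
  have h2 := (Finset.mem_filter.1 hq').2.2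
  omega

/-- (B): the cell to the right of the selected cell does not carry letter `i`. -/
lemma no_i_right
    (hab : ((DD lam kap R C).filter (fun q => T q.1 q.2 = i+1)).card <
      ((DD lam kap R C).filter (fun q => T q.1 q.2 = i)).card)
    (hC : ∀ r, lam r ≤ C)
    (hp : p ∈ DD lam kap R C) (hppos : pos R C p = tt lam kap R C T i - 1)
    (hin : (p.1, p.2 + 1) ∈ DD lam kap R C) :
    T p.1 (p.2 + 1) ≠ i := by
  intro hval
  have htpos := tt_pos hab hC
  have hq₁pos : pos R C (p.1, p.2 + 1) = tt lam kap R C T i := by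
    unfold pos at hppos ⊢
    simp only at hppos ⊢
    omega
  have h1 := cnt_succ_of_cell (T := T) hC hin hq₁pos (i+1)
  have h2 := cnt_succ_of_cell (T := T) hC hin hq₁pos i
  have hlt : hh lam kap R C T i (tt lam kap R C T i + 1) < MM lam kap R C T i := by
    unfold hh at *
    rw [h1, h2, if_neg (by simp only; omega), if_pos hval]
    have h3 : hh lam kap R C T i (tt lam kap R C T i) = MM lam kap R C T i := hh_tt_eq
    unfold hh at h3
    push_cast
    omega
  exact absurd (MM_le_hh hC i _) (not_le.2 hlt)

/-- (C): the cell below the selected cell does not carry letter `i+1`. -/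
lemma no_ip1_below
    (hT : IsSkewSSYT lam kap T) (hkap : Antitone kap)
    (hab : ((DD lam kap R C).filter (fun q => T q.1 q.2 = i+1)).card <
      ((DD lam kap R C).filter (fun q => T q.1 q.2 = i)).card)
    (hR : ∀ r, R ≤ r → lam r = 0) (hC : ∀ r, lam r ≤ C)
    (hp : p ∈ DD lam kap R C) (hppos : pos R C p = tt lam kap R C T i - 1)
    (hpi : T p.1 p.2 = i)
    (hin : (p.1 + 1, p.2) ∈ DD lam kap R C) :
    T (p.1 + 1) p.2 ≠ i + 1 := by
  intro hval
  obtain ⟨r, c⟩ := p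
  simp only at hpi hval
  have htpos := tt_pos hab hC
  have hpDD := (mem_DD_iff hR hC).1 hp
  have hbDD := (mem_DD_iff hR hC).1 hin
  simp only at hpDD hbDD
  -- least column in row r with an i
  have hexist : ∃ c', kap r ≤ c' ∧ c' < lam r ∧ T r c' = i := ⟨c, hpDD.1, hpDD.2, hpi⟩
  classical
  obtain ⟨hk1, hk2, hk3⟩ := Nat.find_spec hexist
  have hcminle : Nat.find hexist ≤ c := Nat.find_le ⟨hpDD.1, hpDD.2, hpi⟩
  set cmin := Nat.find hexist with hcmin
  -- claim 1 : cells (r, c') for cmin ≤ c' ≤ c carry i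
  have claim1 : ∀ c', cmin ≤ c' → c' ≤ c → T r c' = i := by
    intro c' h1 h2
    have ha := hT.1 r cmin c' h1 hk1 (by omega)
    have hb := hT.1 r c' c h2 (by omega) hpDD.2
    omega
  -- claim 2 : cells (r+1, c') for cmin ≤ c' ≤ c carry i+1
  have claim2 : ∀ c', cmin ≤ c' → c' ≤ c → T (r+1) c' = i + 1 := by
    intro c' h1 h2
    have hkk : kap (r+1) ≤ c' := le_trans (le_trans (hkap (Nat.le_succ r)) hk1) h1
    have hll : c' < lam (r+1) := by omega
    have ha := hT.2.1 r (r+1) c' (Nat.lt_succ_self r) (by omega) (by omega) hkk hll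
    have hb := hT.1 (r+1) c' c h2 hkk hbDD.2
    rw [claim1 c' h1 h2] at ha
    omega
  have hbelowDD : ∀ c', cmin ≤ c' → c' ≤ c → (r+1, c') ∈ DD lam kap R C := by
    intro c' h1 h2
    rw [mem_DD_iff hR hC]
    refine ⟨?_, ?_⟩
    · show kap (r+1) ≤ c'
      exact le_trans (le_trans (hkap (Nat.le_succ r)) hk1) h1
    · show c' < lam (r+1)
      omega
  have hrowDD : ∀ c', cmin ≤ c' → c' ≤ c → (r, c') ∈ DD lam kap R C := by
    intro c' h1 h2
    rw [mem_DD_iff hR hC]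
    refine ⟨?_, ?_⟩
    · show kap r ≤ c'
      omega
    · show c' < lam r
      omega
  set s' := pos R C (r+1, cmin) with hs'
  have hs'DD : (r+1, cmin) ∈ DD lam kap R C := hbelowDD cmin le_rfl hcminle
  have hs'lt : s' < tt lam kap R C T i - 1 := by
    rw [← hppos]
    exact pos_lt_of_row_gt hC hp hs'DD (Nat.lt_succ_self r)
  -- count the letters in the reading interval [s', tt)
  have h1 := cnt_split (lam := lam) (kap := kap) (R := R) (C := C) (T := T)
    (s := s') (t := tt lam kap R C T i) (by omega) (i+1)
  have h2 := cnt_split (lam := lam) (kap := kap) (R := R) (C := C) (T := T)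
    (s := s') (t := tt lam kap R C T i) (by omega) i
  -- the i-cells in the interval inject into [cmin, c]
  have hIle : ((DD lam kap R C).filter
      (fun q => T q.1 q.2 = i ∧ s' ≤ pos R C q ∧ pos R C q < tt lam kap R C T i)).card ≤
      c - cmin + 1 := by
    have hsub : (DD lam kap R C).filter
        (fun q => T q.1 q.2 = i ∧ s' ≤ pos R C q ∧ pos R C q < tt lam kap R C T i) ⊆
        (Finset.Icc cmin c).image (fun x => (r, x)) := by
      intro q hq
      obtain ⟨hqDD, hv, hge, hlt⟩ := Finset.mem_filter.1 hq
      -- determine the row of q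
      have hrow : q.1 = r := by
        by_contra hne
        rcases Nat.lt_or_ge q.1 r with hlt' | hge'
        · -- rows above r have larger pos
          have := pos_lt_of_row_gt hC hqDD hp hlt'
          omega
        · have : r + 1 ≤ q.1 := by omega
          rcases Nat.eq_or_lt_of_le this with heq | hgt
          · -- row r+1 : no i's at columns ≥ cmin, smaller pos at columns < cmin
            rcases Nat.lt_or_ge q.2 cmin with hc' | hc'
            · have : pos R C q < s' := by
                rw [hs']
                unfold pos
                rw [← heq]
                simp only
                omega
              omega
            · have hq2 : q.2 < lam (r+1) := by
                have := ((mem_DD_iff hR hC).1 hqDD).2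
                rw [← heq] at this
                exact this
              have hvge : T (r+1) cmin ≤ T (r+1) q.2 :=
                hT.1 (r+1) cmin q.2 hc' (le_trans (hkap (Nat.le_succ r)) hk1) hq2
              have hvq : T (r+1) q.2 = i := by rw [heq]; exact hv
              rw [claim2 cmin le_rfl hcminle] at hvge
              omega
          · have := pos_lt_of_row_gt hC hs'DD hqDD hgt
            omega
      -- now q is in row r, with pos ≤ pos p
      have hcle : q.2 ≤ c := by
        have : pos R C q ≤ pos R C (r, c) := by
          have : pos R C (r, c) = tt lam kap R C T i - 1 := hppos
          omega
        rw [← hrow] at this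
        unfold pos at this
        simp only at this
        omega
      have hcge : cmin ≤ q.2 := by
        by_contra hcon
        have : ¬ (kap r ≤ q.2 ∧ q.2 < lam r ∧ T r q.2 = i) := Nat.find_min hexist (by omega)
        have hqd := (mem_DD_iff hR hC).1 hqDD
        rw [hrow] at hv hqd
        exact this ⟨hqd.1, hqd.2, hv⟩
      refine Finset.mem_image.2 ⟨q.2, Finset.mem_Icc.2 ⟨hcge, hcle⟩, ?_⟩
      rw [← hrow]
    calc _ ≤ ((Finset.Icc cmin c).image (fun x => (r, x))).card := Finset.card_le_card hsub
      _ ≤ (Finset.Icc cmin c).card := Finset.card_image_le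
      _ = c - cmin + 1 := by rw [Nat.card_Icc]; omega
  -- the (i+1)-cells in the interval cover the image of [cmin, c] in row r+1
  have hIge : c - cmin + 1 ≤ ((DD lam kap R C).filter
      (fun q => T q.1 q.2 = i+1 ∧ s' ≤ pos R C q ∧ pos R C q < tt lam kap R C T i)).card := by
    have hsub : (Finset.Icc cmin c).image (fun x => (r+1, x)) ⊆
        (DD lam kap R C).filter
        (fun q => T q.1 q.2 = i+1 ∧ s' ≤ pos R C q ∧ pos R C q < tt lam kap R C T i) := by
      intro q hq
      obtain ⟨x, hx, rfl⟩ := Finset.mem_image.1 hq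
      obtain ⟨hx1, hx2⟩ := Finset.mem_Icc.1 hx
      refine Finset.mem_filter.2 ⟨hbelowDD x hx1 hx2, claim2 x hx1 hx2, ?_, ?_⟩
      · rw [hs']
        unfold pos
        simp only
        omega
      · have := pos_lt_of_row_gt hC hp (hbelowDD x hx1 hx2) (Nat.lt_succ_self r)
        omega
    calc c - cmin + 1 = (Finset.Icc cmin c).card := by rw [Nat.card_Icc]; omega
      _ = ((Finset.Icc cmin c).image (fun x => (r+1, x))).card := by
          rw [Finset.card_image_of_injective _ (fun a b hab' => by
            simpa using hab')]
      _ ≤ _ := Finset.card_le_card hsub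
  -- conclude : hh s' ≤ hh tt = MM, contradicting first attainment
  have hhh : hh lam kap R C T i s' ≤ hh lam kap R C T i (tt lam kap R C T i) := by
    unfold hh
    rw [h1, h2]
    push_cast
    omega
  rw [hh_tt_eq] at hhh
  have := MM_le_hh (lam := lam) (kap := kap) (R := R) (T := T) hC i s'
  have heq : hh lam kap R C T i s' = MM lam kap R C T i := le_antisymm hhh this
  exact hh_ne_MM_of_lt (by omega) heq

end Neighbors

section Operator

variable {lam kap : ℕ → ℕ} {R C : ℕ} {T : ℕ → ℕ → ℕ} {i : ℕ} {p : ℕ × ℕ}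

/-- The crystal operator preserves semistandardness. -/
lemma fT_SSYT
    (hT : IsSkewSSYT lam kap T) (hlam : Antitone lam) (hkap : Antitone kap)
    (hR : ∀ r, R ≤ r → lam r = 0) (hC : ∀ r, lam r ≤ C)
    (hab : ((DD lam kap R C).filter (fun q => T q.1 q.2 = i+1)).card <
      ((DD lam kap R C).filter (fun q => T q.1 q.2 = i)).card) :
    IsSkewSSYT lam kap (fT lam kap R C T i) := by
  obtain ⟨p, hp, hppos, hpi⟩ := selected_cell hab hC
  have hupd := fT_eq_update hab hC hp hppos hpi
  have hpD := (mem_DD_iff hR hC).1 hp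
  refine ⟨?_, ?_, ?_⟩
  · -- rows weakly increase
    intro r c₁ c₂ hle hk hl
    rw [hupd, hupd]
    by_cases h1 : (r, c₁) = p
    · by_cases h2 : (r, c₂) = p
      · rw [if_pos h1, if_pos h2]
      · rw [if_pos h1, if_neg h2]
        -- changed cell on the left : c₁ < c₂ (they differ), need i+1 ≤ T r c₂
        have hc12 : c₁ < c₂ := by
          rcases Nat.lt_or_ge c₁ c₂ with h | h
          · exact h
          · exfalso; apply h2; rw [← h1]; congr 1; omega
        have hTc1 : T r c₁ = i := by rw [← h1] at hpi; exact hpi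
        have hge : i ≤ T r c₂ := by
          have := hT.1 r c₁ c₂ hle hk hl
          omega
        rcases Nat.eq_or_lt_of_le hge with heq | hgt
        · exfalso
          -- then the cell right of p carries i
          have hmem : (r, c₁ + 1) ∈ DD lam kap R C := by
            rw [mem_DD_iff hR hC]
            exact ⟨by show kap r ≤ c₁ + 1; omega, by show c₁ + 1 < lam r; omega⟩
          have hv1 : T r (c₁ + 1) = i := by
            have ha := hT.1 r c₁ (c₁+1) (by omega) hk (by omega)
            have hb := hT.1 r (c₁+1) c₂ (by omega) (by omega) hl
            omega
          exact no_i_right hab hC hp hppos (h1 ▸ hmem) (h1 ▸ hv1)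
        · omega
    · by_cases h2 : (r, c₂) = p
      · rw [if_neg h1, if_pos h2]
        have hTc2 : T r c₂ = i := by rw [← h2] at hpi; exact hpi
        have := hT.1 r c₁ c₂ hle hk hl
        omega
      · rw [if_neg h1, if_neg h2]
        exact hT.1 r c₁ c₂ hle hk hl
  · -- columns strictly increase
    intro r₁ r₂ c hlt hk1 hl1 hk2 hl2
    rw [hupd, hupd]
    by_cases h1 : (r₁, c) = p
    · have h2 : (r₂, c) ≠ p := by rw [← h1]; intro hcon; have := (Prod.ext_iff.1 hcon).1; omega
      rw [if_pos h1, if_neg h2]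
      have hTc1 : T r₁ c = i := by rw [← h1] at hpi; exact hpi
      have hgt : i < T r₂ c := by
        have := hT.2.1 r₁ r₂ c hlt hk1 hl1 hk2 hl2
        omega
      rcases Nat.eq_or_lt_of_le hgt with heq | hgt2
      · exfalso
        -- T r₂ c = i+1 : the matched-below contradiction
        have hmem1 : (r₁ + 1, c) ∈ DD lam kap R C := by
          rw [mem_DD_iff hR hC]
          refine ⟨?_, ?_⟩
          · show kap (r₁+1) ≤ c
            exact le_trans (hkap (Nat.le_succ r₁)) hk1
          · show c < lam (r₁+1)
            have := hlam (show r₁ + 1 ≤ r₂ by omega)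
            omega
        have hval : T (r₁ + 1) c = i + 1 := by
          rcases Nat.eq_or_lt_of_le (show r₁ + 1 ≤ r₂ by omega) with he | hlt2
          · rw [he]; omega
          · exfalso
            have hm1 := (mem_DD_iff hR hC).1 hmem1
            have ha := hT.2.1 r₁ (r₁+1) c (Nat.lt_succ_self _) hk1 hl1 hm1.1 hm1.2
            have hb := hT.2.1 (r₁+1) r₂ c hlt2 hm1.1 hm1.2 hk2 hl2
            omega
        exact no_ip1_below hT hkap hab hR hC hp hppos hpi (h1 ▸ hmem1) (h1 ▸ hval)
      · omega
    · by_cases h2 : (r₂, c) = p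
      · rw [if_neg h1, if_pos h2]
        have hTc2 : T r₂ c = i := by rw [← h2] at hpi; exact hpi
        have := hT.2.1 r₁ r₂ c hlt hk1 hl1 hk2 hl2
        omega
      · rw [if_neg h1, if_neg h2]
        exact hT.2.1 r₁ r₂ c hlt hk1 hl1 hk2 hl2
  · -- zero outside
    intro r c hout
    rw [hupd]
    rw [if_neg, hT.2.2 r c hout]
    intro hcon
    rw [← hcon] at hpD
    simp only at hpD
    omega

/-- The crystal operator moves content from `i` to `i+1`. -/
lemma fT_content
    (hR : ∀ r, R ≤ r → lam r = 0) (hC : ∀ r, lam r ≤ C)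
    (hab : ((DD lam kap R C).filter (fun q => T q.1 q.2 = i+1)).card <
      ((DD lam kap R C).filter (fun q => T q.1 q.2 = i)).card) :
    ∀ v, skewContentOf lam kap (fT lam kap R C T i) v =
      if v = i then skewContentOf lam kap T i - 1
      else if v = i + 1 then skewContentOf lam kap T (i+1) + 1
      else skewContentOf lam kap T v := by
  intro v
  obtain ⟨p, hp, hppos, hpi⟩ := selected_cell hab hC
  have hupd := fT_eq_update hab hC hp hppos hpi
  have hupd' : ∀ q : ℕ × ℕ, fT lam kap R C T i q.1 q.2 = if q = p then i + 1 else T q.1 q.2 := by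
    intro q
    rw [hupd q.1 q.2]
  by_cases hv1 : v = i
  · rw [hv1, if_pos rfl, skewContentOf_eq_card (R := R) (C := C) hR hC,
      skewContentOf_eq_card (R := R) (C := C) hR hC]
    have hset : (DD lam kap R C).filter (fun q => fT lam kap R C T i q.1 q.2 = i) =
        ((DD lam kap R C).filter (fun q => T q.1 q.2 = i)).erase p := by
      ext q
      rw [Finset.mem_erase, Finset.mem_filter, Finset.mem_filter, hupd' q]
      by_cases hq : q = p
      · subst hq; simp
      · simp [hq]
    rw [hset, Finset.card_erase_of_mem]
    exact Finset.mem_filter.2 ⟨hp, hpi⟩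
  · rw [if_neg hv1]
    by_cases hv2 : v = i + 1
    · rw [hv2, if_pos rfl, skewContentOf_eq_card (R := R) (C := C) hR hC,
        skewContentOf_eq_card (R := R) (C := C) hR hC]
      have hset : (DD lam kap R C).filter (fun q => fT lam kap R C T i q.1 q.2 = i + 1) =
          insert p ((DD lam kap R C).filter (fun q => T q.1 q.2 = i + 1)) := by
        ext q
        rw [Finset.mem_insert, Finset.mem_filter, Finset.mem_filter, hupd' q]
        by_cases hq : q = p
        · subst hq; simp [hp]
        · simp [hq]
      rw [hset, Finset.card_insert_of_notMem]
      rw [Finset.mem_filter]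
      rintro ⟨_, hcon⟩
      omega
    · rw [if_neg hv2, skewContentOf_eq_card (R := R) (C := C) hR hC,
        skewContentOf_eq_card (R := R) (C := C) hR hC]
      congr 1
      apply Finset.filter_congr
      intro q hq
      rw [hupd' q]
      by_cases hqp : q = p
      · subst hqp
        rw [if_pos rfl, hpi]
        constructor
        · intro h; exact absurd h.symm hv2
        · intro h; exact absurd h.symm hv1
      · rw [if_neg hqp]

end Operator

section Injective

variable {lam kap : ℕ → ℕ} {R C : ℕ} {T T' : ℕ → ℕ → ℕ} {i : ℕ} {p p' : ℕ × ℕ}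

private lemma hh_relation
    (hp : p ∈ DD lam kap R C) (hp' : p' ∈ DD lam kap R C) (hne : p ≠ p')
    (hTp : T p.1 p.2 = i) (hT'p : T' p.1 p.2 = i + 1)
    (hTp' : T p'.1 p'.2 = i + 1) (hT'p' : T' p'.1 p'.2 = i)
    (hdiff : ∀ q : ℕ × ℕ, q ≠ p → q ≠ p' → T q.1 q.2 = T' q.1 q.2) :
    ∀ t, hh lam kap R C T' i t - hh lam kap R C T i t
      = (if pos R C p < t then 2 else 0) - (if pos R C p' < t then 2 else 0) := by
  intro t
  unfold hh cnt
  rw [Finset.card_filter, Finset.card_filter, Finset.card_filter, Finset.card_filter]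
  push_cast
  rw [← Finset.sum_sub_distrib, ← Finset.sum_sub_distrib, ← Finset.sum_sub_distrib]
  rw [← Finset.sum_subset (show ({p, p'} : Finset (ℕ × ℕ)) ⊆ DD lam kap R C by
      intro x hx
      rcases Finset.mem_insert.1 hx with rfl | hx
      · exact hp
      · rw [Finset.mem_singleton.1 hx]; exact hp')
    (fun x hx hnx => by
      have h1 : x ≠ p := fun hcon => hnx (by rw [hcon]; exact Finset.mem_insert_self _ _)
      have h2 : x ≠ p' := fun hcon => hnx (by
        rw [hcon]; exact Finset.mem_insert_of_mem (Finset.mem_singleton_self _))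
      rw [hdiff x h1 h2]
      ring)]
  rw [Finset.sum_insert (by simp [hne]), Finset.sum_singleton]
  rw [hTp, hT'p, hTp', hT'p']
  by_cases h1 : pos R C p < t <;> by_cases h2 : pos R C p' < t <;>
    simp [h1, h2] <;> ring

private lemma fT_inj_aux
    (hC : ∀ r, lam r ≤ C)
    (hab : ((DD lam kap R C).filter (fun q => T q.1 q.2 = i+1)).card <
      ((DD lam kap R C).filter (fun q => T q.1 q.2 = i)).card)
    (hab' : ((DD lam kap R C).filter (fun q => T' q.1 q.2 = i+1)).card <
      ((DD lam kap R C).filter (fun q => T' q.1 q.2 = i)).card)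
    (hp : p ∈ DD lam kap R C) (hppos : pos R C p = tt lam kap R C T i - 1)
    (hp' : p' ∈ DD lam kap R C) (hppos' : pos R C p' = tt lam kap R C T' i - 1)
    (hTp : T p.1 p.2 = i) (hT'p : T' p.1 p.2 = i + 1)
    (hTp' : T p'.1 p'.2 = i + 1) (hT'p' : T' p'.1 p'.2 = i)
    (hdiff : ∀ q : ℕ × ℕ, q ≠ p → q ≠ p' → T q.1 q.2 = T' q.1 q.2)
    (horder : pos R C p < pos R C p') : False := by
  have hne : p ≠ p' := fun hcon => by rw [hcon] at horder; omega
  have hrel := hh_relation hp hp' hne hTp hT'p hTp' hT'p' hdiff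
  set π₁ := pos R C p with hπ₁
  set π₂ := pos R C p' with hπ₂
  have h1 := tt_pos hab hC
  have h2 := tt_pos hab' hC
  have htt1 : tt lam kap R C T i = π₁ + 1 := by omega
  have htt2 : tt lam kap R C T' i = π₂ + 1 := by omega
  -- M' = hh π₂ + 1
  have hMM' : MM lam kap R C T' i = hh lam kap R C T i (π₂ + 1) := by
    have := hrel (π₂ + 1)
    rw [if_pos (by omega), if_pos (by omega)] at this
    have h3 : hh lam kap R C T' i (π₂ + 1) = MM lam kap R C T' i := by
      rw [← htt2]; exact hh_tt_eq
    omega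
  have hstep2 : hh lam kap R C T i (π₂ + 1) = hh lam kap R C T i π₂ + 1 := by
    have hc1 := cnt_succ_of_cell (T := T) hC hp' rfl (i+1)
    have hc2 := cnt_succ_of_cell (T := T) hC hp' rfl i
    rw [if_pos hTp'] at hc1
    rw [if_neg (by omega)] at hc2
    unfold hh
    rw [hc1, hc2]
    push_cast
    ring
  have hM2 : MM lam kap R C T i ≤ hh lam kap R C T i π₂ := MM_le_hh hC i π₂
  -- so M' ≥ M + 1
  have hM'geq : MM lam kap R C T i + 1 ≤ MM lam kap R C T' i := by omega
  -- for t ≤ π₁ : hh T t = hh T' t ≥ M' + 1 ≥ M + 2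
  have hbig : ∀ t, t ≤ π₁ → MM lam kap R C T i + 2 ≤ hh lam kap R C T i t := by
    intro t ht
    have heq : hh lam kap R C T' i t = hh lam kap R C T i t := by
      have := hrel t
      rw [if_neg (by omega), if_neg (by omega)] at this
      omega
    have hlow : MM lam kap R C T' i ≤ hh lam kap R C T' i t := MM_le_hh hC i t
    have hnotmin : hh lam kap R C T' i t ≠ MM lam kap R C T' i :=
      hh_ne_MM_of_lt (by omega)
    omega
  -- but hh T (π₁ + 1) = M and steps are size ≤ 1
  have hfin : hh lam kap R C T i (π₁ + 1) = MM lam kap R C T i := by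
    rw [← htt1]; exact hh_tt_eq
  have hstep := (hh_step (lam := lam) (kap := kap) (R := R) (T := T) hC i π₁).1
  have := hbig π₁ le_rfl
  omega

/-- The crystal operator is injective. -/
lemma fT_injective
    (hC : ∀ r, lam r ≤ C)
    (hab : ((DD lam kap R C).filter (fun q => T q.1 q.2 = i+1)).card <
      ((DD lam kap R C).filter (fun q => T q.1 q.2 = i)).card)
    (hab' : ((DD lam kap R C).filter (fun q => T' q.1 q.2 = i+1)).card <
      ((DD lam kap R C).filter (fun q => T' q.1 q.2 = i)).card)
    (hfT : fT lam kap R C T i = fT lam kap R C T' i) : T = T' := by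
  obtain ⟨p, hp, hppos, hpi⟩ := selected_cell hab hC
  obtain ⟨p', hp', hppos', hpi'⟩ := selected_cell hab' hC
  have hupd := fT_eq_update hab hC hp hppos hpi
  have hupd' := fT_eq_update hab' hC hp' hppos' hpi'
  have hptwise : ∀ r c, (if (r, c) = p then i + 1 else T r c) =
      (if (r, c) = p' then i + 1 else T' r c) := by
    intro r c
    rw [← hupd, ← hupd', hfT]
  by_cases hpp : p = p'
  · subst hpp
    funext r c
    have := hptwise r c
    by_cases h : (r, c) = p
    · rw [← h] at hpi hpi'
      rw [hpi, hpi']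
    · rw [if_neg h, if_neg h] at this
      exact this
  · -- distinct changed cells : impossible
    exfalso
    have hdiff : ∀ q : ℕ × ℕ, q ≠ p → q ≠ p' → T q.1 q.2 = T' q.1 q.2 := by
      intro q h1 h2
      have := hptwise q.1 q.2
      rw [if_neg (by simpa using h1), if_neg (by simpa using h2)] at this
      exact this
    have hT'p : T' p.1 p.2 = i + 1 := by
      have := hptwise p.1 p.2
      rw [if_pos (by simp), if_neg (by simpa using hpp)] at this
      exact this.symm
    have hTp' : T p'.1 p'.2 = i + 1 := by
      have := hptwise p'.1 p'.2
      rw [if_neg (by simpa using (Ne.symm hpp : p' ≠ p)), if_pos (by simp)] at this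
      exact this
    have hposne : pos R C p ≠ pos R C p' := fun hcon => hpp (pos_injOn hC hp hp' hcon)
    rcases Nat.lt_or_ge (pos R C p) (pos R C p') with hlt | hge
    · exact fT_inj_aux hC hab hab' hp hppos hp' hppos' hpi hT'p hTp' hpi' hdiff hlt
    · exact fT_inj_aux hC hab' hab hp' hppos' hp hppos hpi' hTp' hT'p hpi
        (fun q h1 h2 => (hdiff q h2 h1).symm) (by omega)

end Injective

section Finiteness

variable {lam kap : ℕ → ℕ} {R C : ℕ}

lemma SSYT_finite (hR : ∀ r, R ≤ r → lam r = 0) (hC : ∀ r, lam r ≤ C)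
    (γ : ℕ → ℕ) (hγ : (Function.support γ).Finite) :
    {T : ℕ → ℕ → ℕ | IsSkewSSYT lam kap T ∧ ∀ v, skewContentOf lam kap T v = γ v}.Finite := by
  classical
  set V := hγ.toFinset.sup id with hV
  set S := {T : ℕ → ℕ → ℕ | IsSkewSSYT lam kap T ∧ ∀ v, skewContentOf lam kap T v = γ v}
    with hS
  have hbound : ∀ T ∈ S, ∀ q ∈ DD lam kap R C, T q.1 q.2 ≤ V := by
    intro T hT q hq
    have hcard : γ (T q.1 q.2) =
        ((DD lam kap R C).filter (fun x => T x.1 x.2 = T q.1 q.2)).card := by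
      rw [← hT.2 (T q.1 q.2), skewContentOf_eq_card (R := R) (C := C) hR hC]
    have hqmem : q ∈ (DD lam kap R C).filter (fun x => T x.1 x.2 = T q.1 q.2) :=
      Finset.mem_filter.2 ⟨hq, rfl⟩
    have hpos : 0 < γ (T q.1 q.2) := by
      rw [hcard]
      exact Finset.card_pos.2 ⟨q, hqmem⟩
    have hmem : T q.1 q.2 ∈ hγ.toFinset := by
      rw [Set.Finite.mem_toFinset, Function.mem_support]
      omega
    exact Finset.le_sup (f := id) hmem
  set Φ : (ℕ → ℕ → ℕ) → ({x // x ∈ DD lam kap R C} → Fin (V+1)) :=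
    fun T q => ⟨min (T q.1.1 q.1.2) V, by omega⟩ with hΦ
  have hinj : Set.InjOn Φ S := by
    intro T hT T' hT' heq
    funext r c
    by_cases hmem : (r, c) ∈ DD lam kap R C
    · have := congrFun heq ⟨(r, c), hmem⟩
      rw [hΦ] at this
      simp only [Fin.mk.injEq] at this
      have h1 := hbound T hT (r, c) hmem
      have h2 := hbound T' hT' (r, c) hmem
      simp only at this h1 h2
      omega
    · have hout : c < kap r ∨ lam r ≤ c := by
        by_contra hcon
        push_neg at hcon
        exact hmem ((mem_DD_iff hR hC).2
          ⟨by show kap r ≤ c; omega, by show c < lam r; omega⟩)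
      rw [hT.1.2.2 r c hout, hT'.1.2.2 r c hout]
  exact Set.Finite.of_finite_image (Set.toFinite (Φ '' S)) hinj

lemma crystal_step (hR : ∀ r, R ≤ r → lam r = 0) (hC : ∀ r, lam r ≤ C)
    (hlamA : Antitone lam) (hkapA : Antitone kap)
    (γ : ℕ → ℕ) (hγfin : (Function.support γ).Finite) (i : ℕ) (hgt : γ (i+1) < γ i) :
    SkewKostka lam kap γ ≤ SkewKostka lam kap
      (fun v => if v = i then γ i - 1 else if v = i + 1 then γ (i+1) + 1 else γ v) := by
  classical
  set γ' := fun v => if v = i then γ i - 1 else if v = i + 1 then γ (i+1) + 1 else γ v with hγ'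
  set S := {T : ℕ → ℕ → ℕ | IsSkewSSYT lam kap T ∧ ∀ v, skewContentOf lam kap T v = γ v}
    with hS
  set S' := {T : ℕ → ℕ → ℕ | IsSkewSSYT lam kap T ∧ ∀ v, skewContentOf lam kap T v = γ' v}
    with hS'
  have hγ'fin : (Function.support γ').Finite := by
    apply Set.Finite.subset (hγfin.union (Set.finite_singleton (i+1)))
    intro x hx
    rw [Function.mem_support, hγ'] at hx
    by_cases h1 : x = i
    · left; rw [Function.mem_support]; subst h1; simp at hx; omega
    · by_cases h2 : x = i + 1
      · right; rw [h2]; exact rfl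
      · left; rw [Function.mem_support]; simp [h1, h2] at hx; exact hx
  have hfin' : S'.Finite := SSYT_finite hR hC γ' hγ'fin
  -- counts hypothesis for members of S
  have hab : ∀ T ∈ S, ((DD lam kap R C).filter (fun q => T q.1 q.2 = i+1)).card <
      ((DD lam kap R C).filter (fun q => T q.1 q.2 = i)).card := by
    intro T hT
    have h1 := hT.2 i
    have h2 := hT.2 (i+1)
    rw [skewContentOf_eq_card (R := R) (C := C) hR hC] at h1 h2
    omega
  have hmaps : ∀ T ∈ S, fT lam kap R C T i ∈ S' := by
    intro T hT
    refine ⟨fT_SSYT hT.1 hlamA hkapA hR hC (hab T hT), ?_⟩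
    intro v
    rw [fT_content hR hC (hab T hT) v, hγ']
    simp only [hT.2 i, hT.2 (i+1), hT.2 v]
  have hinj : Set.InjOn (fun T => fT lam kap R C T i) S := by
    intro T hT T' hT' heq
    exact fT_injective hC (hab T hT) (hab T' hT') heq
  calc SkewKostka lam kap γ = S.ncard := rfl
    _ = ((fun T => fT lam kap R C T i) '' S).ncard := (Set.ncard_image_of_injOn hinj).symm
    _ ≤ S'.ncard := Set.ncard_le_ncard (fun x hx => by
        obtain ⟨T, hT, rfl⟩ := hx
        exact hmaps T hT) hfin'
    _ = SkewKostka lam kap γ' := rfl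

end Finiteness

section Move

variable {lam kap : ℕ → ℕ} {R C : ℕ}

/-- Move one unit of content from index `a` to index `b`. -/
def Move (μ : ℕ → ℕ) (a b : ℕ) : ℕ → ℕ := fun r =>
  if r = a then μ a - 1 else if r = b then μ r + 1 else μ r

lemma Move_support (μ : ℕ → ℕ) (hμ : (Function.support μ).Finite) (a b : ℕ) :
    (Function.support (Move μ a b)).Finite := by
  apply Set.Finite.subset (hμ.union (Set.finite_singleton b))
  intro x hx
  rw [Function.mem_support] at hx
  unfold Move at hx
  by_cases h1 : x = a
  · left; rw [if_pos h1] at hx; rw [Function.mem_support]; subst h1; omega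
  · by_cases h2 : x = b
    · right; exact h2
    · left; rw [if_neg h1, if_neg h2] at hx; exact hx

lemma Move_succ_eq (μ : ℕ → ℕ) (a : ℕ) :
    (fun v => if v = a then μ a - 1 else if v = a + 1 then μ (a+1) + 1 else μ v) =
      Move μ a (a+1) := by
  funext v
  unfold Move
  by_cases h1 : v = a
  · rw [if_pos h1, if_pos h1]
  · rw [if_neg h1, if_neg h1]
    by_cases h2 : v = a + 1
    · rw [if_pos h2, if_pos h2, h2]
    · rw [if_neg h2, if_neg h2]

lemma Move_step_eq (μ : ℕ → ℕ) (a b : ℕ) (hab : a < b) :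
    (fun v => if v = b then (Move μ a b) b - 1
      else if v = b + 1 then (Move μ a b) (b+1) + 1 else (Move μ a b) v) =
      Move μ a (b+1) := by
  have hba : b ≠ a := by omega
  have hb1a : b + 1 ≠ a := by omega
  have hbb1 : b ≠ b + 1 := by omega
  funext v
  by_cases h1 : v = b
  · rw [if_pos h1, h1]
    unfold Move
    rw [if_neg hba, if_pos rfl, if_neg hba, if_neg hbb1]
    omega
  · rw [if_neg h1]
    by_cases h2 : v = b + 1
    · rw [if_pos h2, h2]
      unfold Move
      rw [if_neg hb1a, if_neg hb1a, if_pos rfl, if_neg (by omega : ¬ b + 1 = b)]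
    · rw [if_neg h2]
      unfold Move
      by_cases h3 : v = a
      · rw [if_pos h3, if_pos h3]
      · rw [if_neg h3, if_neg h3, if_neg h1, if_neg h2]

lemma move_le (hR : ∀ r, R ≤ r → lam r = 0) (hC : ∀ r, lam r ≤ C)
    (hlamA : Antitone lam) (hkapA : Antitone kap)
    (μ : ℕ → ℕ) (hμfin : (Function.support μ).Finite) (hμA : Antitone μ)
    (a : ℕ) (hgt : μ (a+1) < μ a) :
    ∀ b, a < b → SkewKostka lam kap μ ≤ SkewKostka lam kap (Move μ a b) := by
  intro b
  induction b with
  | zero => omega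
  | succ b ih =>
    intro hab
    rcases Nat.lt_or_ge a b with h | h
    · have h1 := ih h
      have hgt2 : (Move μ a b) (b+1) < (Move μ a b) b := by
        unfold Move
        rw [if_neg (by omega : b + 1 ≠ a), if_neg (by omega : b + 1 ≠ b),
          if_neg (by omega : b ≠ a), if_pos rfl]
        have := hμA (show b ≤ b + 1 by omega)
        omega
      have h2 := crystal_step hR hC hlamA hkapA (Move μ a b)
        (Move_support μ hμfin a b) b hgt2
      rw [Move_step_eq μ a b h] at h2
      exact le_trans h1 h2
    · have hb : b = a := by omega
      subst hb
      have h2 := crystal_step hR hC hlamA hkapA μ hμfin b hgt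
      rw [Move_succ_eq μ b] at h2
      exact h2

end Move

section Chain

variable {lam kap : ℕ → ℕ} {R C : ℕ}

def psum (μ : ℕ → ℕ) (r : ℕ) : ℕ := ∑ x ∈ Finset.range r, μ x

lemma exists_bound (f : ℕ → ℕ) (hf : (Function.support f).Finite) :
    ∃ B, ∀ r, B ≤ r → f r = 0 := by
  refine ⟨hf.toFinset.sup id + 1, fun r hr => ?_⟩
  by_contra h
  have hmem : r ∈ hf.toFinset := by
    rw [Set.Finite.mem_toFinset, Function.mem_support]; exact h
  have := Finset.le_sup (f := id) hmem
  simp only [id] at this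
  omega

lemma finsum_eq_psum (f : ℕ → ℕ) {B : ℕ} (hB : ∀ r, B ≤ r → f r = 0) :
    ∑ᶠ x, f x = psum f B := by
  show ∑ᶠ x, f x = ∑ x ∈ Finset.range B, f x
  apply finsum_eq_sum_of_support_subset
  intro x hx
  rw [Function.mem_support] at hx
  rw [Finset.coe_range, Set.mem_Iio]
  by_contra hc
  exact hx (hB x (by omega))

lemma chain_le (hR : ∀ r, R ≤ r → lam r = 0) (hC : ∀ r, lam r ≤ C)
    (hlamA : Antitone lam) (hkapA : Antitone kap) :
    ∀ d (μ ν : ℕ → ℕ), Antitone μ → Antitone ν → (Function.support μ).Finite →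
      (Function.support ν).Finite → (∀ r, psum ν r ≤ psum μ r) →
      (∑ᶠ x, μ x = ∑ᶠ x, ν x) →
      (∑ᶠ r, (psum μ r - psum ν r)) = d →
      SkewKostka lam kap μ ≤ SkewKostka lam kap ν := by
  intro d
  induction d using Nat.strong_induction_on with
  | _ d IH =>
  intro μ ν hμA hνA hμf hνf hdom hsum hd
  by_cases hμν : μ = ν
  · rw [hμν]
  obtain ⟨Bμ, hBμ⟩ := exists_bound μ hμf
  obtain ⟨Bν, hBν⟩ := exists_bound ν hνf
  have hpseq : ∀ r, Bμ ⊔ Bν ≤ r → psum μ r = psum ν r := by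
    intro r hr
    have h1 : psum μ r = ∑ᶠ x, μ x := (finsum_eq_psum μ (fun x hx => hBμ x (by omega))).symm
    have h2 : psum ν r = ∑ᶠ x, ν x := (finsum_eq_psum ν (fun x hx => hBν x (by omega))).symm
    rw [h1, h2, hsum]
  -- the first index where μ and ν differ
  have hiex : ∃ k, μ k ≠ ν k := by
    by_contra hcon
    push_neg at hcon
    exact hμν (funext hcon)
  set i := Nat.find hiex with hidef
  have hi : μ i ≠ ν i := Nat.find_spec hiex
  have himin : ∀ k, k < i → μ k = ν k := fun k hk => not_ne_iff.1 (Nat.find_min hiex hk)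
  have hpref : ∀ k, k ≤ i → psum μ k = psum ν k := by
    intro k hk
    unfold psum
    apply Finset.sum_congr rfl
    intro x hx
    exact himin x (by have := Finset.mem_range.1 hx; omega)
  have hνi : ν i < μ i := by
    have h1 := hdom (i+1)
    have h2 := hpref i le_rfl
    unfold psum at h1 h2
    rw [Finset.sum_range_succ, Finset.sum_range_succ] at h1
    omega
  -- the first index after i where μ < ν
  have hjex : ∃ k, i < k ∧ μ k < ν k := by
    by_contra hcon
    push_neg at hcon
    have hlt : psum ν ((Bμ ⊔ Bν) ⊔ (i+1)) < psum μ ((Bμ ⊔ Bν) ⊔ (i+1)) := by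
      unfold psum
      apply Finset.sum_lt_sum
      · intro k hk
        rcases lt_trichotomy k i with h | h | h
        · rw [himin k h]
        · rw [h]; omega
        · exact hcon k h
      · exact ⟨i, Finset.mem_range.2 (by omega), hνi⟩
    have := hpseq ((Bμ ⊔ Bν) ⊔ (i+1)) (by omega)
    omega
  set j := Nat.find hjex with hjdef
  obtain ⟨hji, hjlt⟩ : i < j ∧ μ j < ν j := Nat.find_spec hjex
  have hjmin : ∀ k, i < k → k < j → ν k ≤ μ k := by
    intro k h1 h2
    have := Nat.find_min hjex h2
    omega
  have hwindow : ∀ r, i + 1 ≤ r → r ≤ j → psum ν r < psum μ r := by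
    intro r hr
    induction r, hr using Nat.le_induction with
    | base =>
      intro _
      have h2 := hpref i le_rfl
      unfold psum at h2 ⊢
      rw [Finset.sum_range_succ, Finset.sum_range_succ]
      omega
    | succ r hr ih =>
      intro hrj
      have h1 := ih (by omega)
      have h2 := hjmin r (by omega) (by omega)
      unfold psum at h1 ⊢
      rw [Finset.sum_range_succ, Finset.sum_range_succ]
      omega
  have hμji : μ j < μ i := by
    have h1 : ν j ≤ ν i := hνA (le_of_lt hji)
    omega
  -- the end of the run of value μ i
  have haex : ∃ k, i ≤ k ∧ μ (k+1) < μ i := by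
    refine ⟨j - 1, by omega, ?_⟩
    have hj1 : j - 1 + 1 = j := by omega
    rw [hj1]
    exact hμji
  set a := Nat.find haex with hadef
  obtain ⟨hai, ha2⟩ : i ≤ a ∧ μ (a+1) < μ i := Nat.find_spec haex
  have hrun : ∀ k, i ≤ k → k ≤ a → μ k = μ i := by
    intro k h1 h2
    have hle : μ k ≤ μ i := hμA h1
    rcases Nat.eq_or_lt_of_le h1 with he | hlt2
    · rw [← he]
    · have h3 : k - 1 < a := by omega
      have h4 := Nat.find_min haex h3
      have h5 : k - 1 + 1 = k := by omega
      rw [h5] at h4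
      omega
  have hμa : μ a = μ i := hrun a hai le_rfl
  have haj : a < j := by
    by_contra hcon
    have := hrun j (by omega) (by omega)
    omega
  -- the start of the run of value μ j
  have hbex : ∃ k, μ k = μ j := ⟨j, rfl⟩
  set b := Nat.find hbex with hbdef
  have hb : μ b = μ j := Nat.find_spec hbex
  have hbj : b ≤ j := Nat.find_le rfl
  have hbmin : ∀ k, k < b → μ j < μ k := by
    intro k hk
    have h1 := Nat.find_min hbex hk
    have h2 : μ j ≤ μ k := hμA (by omega)
    omega
  have hab : a < b := by
    by_contra hcon
    push_neg at hcon
    rcases Nat.lt_or_ge b i with h | h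
    · have := hμA (le_of_lt h)
      omega
    · have := hrun b h hcon
      omega
  have hb2 : μ b + 2 ≤ μ a := by
    have h1 : ν j ≤ ν i := hνA (le_of_lt hji)
    omega
  have hbprev : ∀ k, k + 1 = b → μ b + 1 ≤ μ k := by
    intro k hk
    have := hbmin k (by omega)
    omega
  have hgtA : μ (a+1) < μ a := by omega
  -- the moved content
  set μ' := Move μ a b with hμ'def
  have hMa : μ' a = μ a - 1 := by rw [hμ'def]; unfold Move; rw [if_pos rfl]
  have hMb : μ' b = μ b + 1 := by
    rw [hμ'def]; unfold Move; rw [if_neg (by omega : ¬ b = a), if_pos rfl]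
  have hMo : ∀ k, k ≠ a → k ≠ b → μ' k = μ k := fun k h1 h2 => by
    rw [hμ'def]; unfold Move; rw [if_neg h1, if_neg h2]
  have hμa1 : 1 ≤ μ a := by omega
  have hμ'A : Antitone μ' := by
    apply antitone_nat_of_succ_le
    intro r
    have hc : μ (r+1) ≤ μ r := hμA (show r ≤ r + 1 by omega)
    by_cases e1 : r = a
    · rw [e1, hMa]
      by_cases e2 : a + 1 = b
      · rw [show a + 1 = b from e2, hMb]
        have h3 : μ (a+1) = μ b := by rw [e2]
        omega
      · rw [hMo (a+1) (by omega) (by omega)]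
        omega
    · by_cases e2 : r = b
      · rw [e2, hMb, hMo (b+1) (by omega) (by omega)]
        have := hμA (show b ≤ b + 1 by omega)
        omega
      · rw [hMo r e1 e2]
        by_cases e3 : r + 1 = a
        · rw [e3, hMa]
          have h3 : μ a ≤ μ r := by rw [← e3]; exact hc
          omega
        · by_cases e4 : r + 1 = b
          · rw [e4, hMb]
            exact hbprev r e4
          · rw [hMo (r+1) e3 e4]
            exact hc
  have hμ'f : (Function.support μ').Finite := by
    rw [hμ'def]; exact Move_support μ hμf a b
  -- partial sums of μ'
  have hpsum' : ∀ r, psum μ' r + (if a < r ∧ r ≤ b then 1 else 0) = psum μ r := by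
    intro r
    induction r with
    | zero => simp [psum]
    | succ r ih =>
      unfold psum at ih ⊢
      rw [Finset.sum_range_succ, Finset.sum_range_succ]
      by_cases e1 : r = a
      · rw [e1] at ih ⊢
        rw [hMa]
        split_ifs at ih ⊢ <;> omega
      · by_cases e2 : r = b
        · rw [e2] at ih ⊢
          rw [hMb]
          split_ifs at ih ⊢ <;> omega
        · rw [hMo r e1 e2]
          split_ifs at ih ⊢ <;> omega
  have hdom' : ∀ r, psum ν r ≤ psum μ' r := by
    intro r
    have h1 := hpsum' r
    by_cases hcase : a < r ∧ r ≤ b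
    · rw [if_pos hcase] at h1
      have h2 := hwindow r (by omega) (by omega)
      omega
    · rw [if_neg hcase] at h1
      have := hdom r
      omega
  -- total sums agree
  set B2 := ((Bμ ⊔ Bν) ⊔ (b+1)) with hB2
  have hμ'0 : ∀ r, B2 ≤ r → μ' r = 0 := by
    intro r hr
    rw [hMo r (by omega) (by omega)]
    exact hBμ r (by omega)
  have hsum' : ∑ᶠ x, μ' x = ∑ᶠ x, ν x := by
    rw [finsum_eq_psum μ' hμ'0]
    have h1 := hpsum' B2
    rw [if_neg (by omega)] at h1
    have h2 : psum μ B2 = ∑ᶠ x, μ x := (finsum_eq_psum μ (fun x hx => hBμ x (by omega))).symm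
    omega
  -- the measure strictly decreases
  have hgsupp : ∀ r, B2 ≤ r → psum μ r - psum ν r = 0 := by
    intro r hr
    have := hpseq r (by omega)
    omega
  have hgsupp' : ∀ r, B2 ≤ r → psum μ' r - psum ν r = 0 := by
    intro r hr
    have h1 := hpsum' r
    rw [if_neg (by omega)] at h1
    have := hpseq r (by omega)
    omega
  have hd' : ∑ᶠ r, (psum μ' r - psum ν r) < d := by
    rw [← hd, finsum_eq_psum _ hgsupp', finsum_eq_psum _ hgsupp]
    unfold psum
    apply Finset.sum_lt_sum
    · intro k hk
      have h1 := hpsum' k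
      unfold psum at h1
      split_ifs at h1 <;> omega
    · refine ⟨b, Finset.mem_range.2 (by omega), ?_⟩
      have h1 := hpsum' b
      rw [if_pos (by omega)] at h1
      have h2 := hwindow b (by omega) (by omega)
      unfold psum at h1 h2
      omega
  -- put the two steps together
  have hK1 := move_le hR hC hlamA hkapA μ hμf hμA a hgtA b hab
  have hK2 := IH _ hd' μ' ν hμ'A hνA hμ'f hνf hdom' hsum' rfl
  rw [hμ'def] at hK2
  exact le_trans hK1 hK2

end Chain

end Kostka169

theorem kostka_note_stmt16 {n : ℕ} (lam kap μ ν : ℕ → ℕ)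
    (hlam : Antitone lam) (hkap : Antitone kap)
    (hfin : (Function.support lam).Finite)
    (hsub : ∀ r, kap r ≤ lam r)
    (hsize : ∑ᶠ r, (lam r - kap r) = n)
    (hμ : IsPartition n μ) (hν : IsPartition n ν)
    (h : Dominates μ ν) :
    SkewKostka lam kap μ ≤ SkewKostka lam kap ν := by
  obtain ⟨R, hR⟩ := Kostka169.exists_bound lam hfin
  have hC : ∀ r, lam r ≤ lam 0 := fun r => hlam (Nat.zero_le r)
  obtain ⟨hμA, hμf, hμs⟩ := hμ
  obtain ⟨hνA, hνf, hνs⟩ := hν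
  exact Kostka169.chain_le hR hC hlam hkap _ μ ν hμA hνA hμf hνf h
    (by rw [hμs, hνs]) rfl
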